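/- Let R be an η-symmetric linear operator on ℝ^5 that possesses a timelike eigenvector, i.e., there exist t ∈ ℝ^5 with η(t,t) < 0 and μ ∈ ℝ with R t = μ t. Then there exists a basis e1, e2, e3, e4, e5 of ℝ^5 consisting of eigenvectors of R that are pairwise η-orthogonal, with η(e1,e1) = -1 and η(e2,e2) = η(e3,e3) = η(e4,e4) = η(e5,e5) = 1. (An η-symmetric operator with a timelike eigenvector is diagonalizable over ℝ in an η-orthonormal eigenbasis; Segre type [1,1111] or a degeneracy thereof.) -/

import Mathlib

/-- The 5-dimensional Minkowski bilinear form of signature (-,+,+,+,+). -/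
def eta (u v : Fin 5 → ℝ) : ℝ :=
  -u 0 * v 0 + u 1 * v 1 + u 2 * v 2 + u 3 * v 3 + u 4 * v 4

lemma eta_comm (u v : Fin 5 → ℝ) : eta u v = eta v u := by simp [eta]; ring
lemma eta_smul_left (c : ℝ) (u v : Fin 5 → ℝ) : eta (c • u) v = c * eta u v := by
  simp [eta]; ring
lemma eta_smul_right (c : ℝ) (u v : Fin 5 → ℝ) : eta u (c • v) = c * eta u v := by
  simp [eta]; ring
lemma eta_add_left (u v w : Fin 5 → ℝ) : eta (u + v) w = eta u w + eta v w := by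
  simp [eta]; ring
lemma eta_add_right (u v w : Fin 5 → ℝ) : eta u (v + w) = eta u v + eta u w := by
  simp [eta]; ring
lemma eta_zero_right (u : Fin 5 → ℝ) : eta u 0 = 0 := by simp [eta]

set_option maxHeartbeats 1000000 in
lemma eta_pos_of_orth {t w : Fin 5 → ℝ} (ht : eta t t < 0)
    (how : eta t w = 0) (hw : w ≠ 0) : 0 < eta w w := by
  simp only [eta] at ht how ⊢
  by_contra hcon
  push_neg at hcon
  have ht0 : t 0 ≠ 0 := by
    intro h; rw [h] at ht
    nlinarith [mul_self_nonneg (t 1), mul_self_nonneg (t 2), mul_self_nonneg (t 3),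
      mul_self_nonneg (t 4)]
  have hA : t 1 * t 1 + t 2 * t 2 + t 3 * t 3 + t 4 * t 4 < t 0 * t 0 := by nlinarith
  have hw0 : w 1 * w 1 + w 2 * w 2 + w 3 * w 3 + w 4 * w 4 ≤ w 0 * w 0 := by nlinarith
  have hT : t 0 * w 0 = t 1 * w 1 + t 2 * w 2 + t 3 * w 3 + t 4 * w 4 := by linarith
  have lag : (t 1 * w 1 + t 2 * w 2 + t 3 * w 3 + t 4 * w 4)
        * (t 1 * w 1 + t 2 * w 2 + t 3 * w 3 + t 4 * w 4)
      ≤ (t 1 * t 1 + t 2 * t 2 + t 3 * t 3 + t 4 * t 4)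
        * (w 1 * w 1 + w 2 * w 2 + w 3 * w 3 + w 4 * w 4) := by
    nlinarith [mul_self_nonneg (t 1 * w 2 - t 2 * w 1), mul_self_nonneg (t 1 * w 3 - t 3 * w 1),
      mul_self_nonneg (t 1 * w 4 - t 4 * w 1), mul_self_nonneg (t 2 * w 3 - t 3 * w 2),
      mul_self_nonneg (t 2 * w 4 - t 4 * w 2), mul_self_nonneg (t 3 * w 4 - t 4 * w 3)]
  have step : t 0 * t 0 * (w 1 * w 1 + w 2 * w 2 + w 3 * w 3 + w 4 * w 4)
      ≤ (t 1 * t 1 + t 2 * t 2 + t 3 * t 3 + t 4 * t 4)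
        * (w 1 * w 1 + w 2 * w 2 + w 3 * w 3 + w 4 * w 4) := by
    have h1 : t 0 * t 0 * (w 1 * w 1 + w 2 * w 2 + w 3 * w 3 + w 4 * w 4)
        ≤ t 0 * t 0 * (w 0 * w 0) :=
      mul_le_mul_of_nonneg_left hw0 (mul_self_nonneg _)
    have h2 : t 0 * t 0 * (w 0 * w 0) = (t 0 * w 0) * (t 0 * w 0) := by ring
    rw [h2, hT] at h1
    exact h1.trans lag
  have hB : w 1 * w 1 + w 2 * w 2 + w 3 * w 3 + w 4 * w 4 ≤ 0 := by nlinarith [step, hA]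
  have h1 : w 1 = 0 := mul_self_eq_zero.1 (le_antisymm (by
    nlinarith [mul_self_nonneg (w 2), mul_self_nonneg (w 3), mul_self_nonneg (w 4)])
    (mul_self_nonneg _))
  have h2 : w 2 = 0 := mul_self_eq_zero.1 (le_antisymm (by
    nlinarith [mul_self_nonneg (w 1), mul_self_nonneg (w 3), mul_self_nonneg (w 4)])
    (mul_self_nonneg _))
  have h3 : w 3 = 0 := mul_self_eq_zero.1 (le_antisymm (by
    nlinarith [mul_self_nonneg (w 1), mul_self_nonneg (w 2), mul_self_nonneg (w 4)])
    (mul_self_nonneg _))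
  have h4 : w 4 = 0 := mul_self_eq_zero.1 (le_antisymm (by
    nlinarith [mul_self_nonneg (w 1), mul_self_nonneg (w 2), mul_self_nonneg (w 3)])
    (mul_self_nonneg _))
  have h0 : w 0 = 0 := by
    rw [h1, h2, h3, h4] at how
    have : t 0 * w 0 = 0 := by linarith
    exact (mul_eq_zero.1 this).resolve_left ht0
  apply hw
  funext i
  fin_cases i <;> simp [h0, h1, h2, h3, h4]

/-- `eta t ·` as a linear functional. -/
def etaL (t : Fin 5 → ℝ) : (Fin 5 → ℝ) →ₗ[ℝ] ℝ where
  toFun v := eta t v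
  map_add' x y := eta_add_right t x y
  map_smul' c x := by simpa using eta_smul_right c t x

/-- The eta-orthogonal complement of `t`, as a type synonym carrying no norm instances. -/
def Wt (t : Fin 5 → ℝ) : Type := LinearMap.ker (etaL t)

noncomputable instance (t : Fin 5 → ℝ) : AddCommGroup (Wt t) :=
  inferInstanceAs (AddCommGroup (LinearMap.ker (etaL t)))
noncomputable instance (t : Fin 5 → ℝ) : Module ℝ (Wt t) :=
  inferInstanceAs (Module ℝ (LinearMap.ker (etaL t)))
instance (t : Fin 5 → ℝ) : FiniteDimensional ℝ (Wt t) :=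
  inferInstanceAs (FiniteDimensional ℝ (LinearMap.ker (etaL t)))

def Wt.val {t : Fin 5 → ℝ} (x : Wt t) : Fin 5 → ℝ := Subtype.val x

theorem timelike_eigenvector_diagonalizable
    (R : (Fin 5 → ℝ) →ₗ[ℝ] (Fin 5 → ℝ))
    (hR : ∀ u v : Fin 5 → ℝ, eta (R u) v = eta u (R v))
    (t : Fin 5 → ℝ) (ht : eta t t < 0) (μ : ℝ) (hμ : R t = μ • t) :
    ∃ e1 e2 e3 e4 e5 : Fin 5 → ℝ,
      (LinearIndependent ℝ ![e1, e2, e3, e4, e5] ∧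
        Submodule.span ℝ {e1, e2, e3, e4, e5} = (⊤ : Submodule ℝ (Fin 5 → ℝ))) ∧
      (∃ μ1 : ℝ, R e1 = μ1 • e1) ∧ (∃ μ2 : ℝ, R e2 = μ2 • e2) ∧
      (∃ μ3 : ℝ, R e3 = μ3 • e3) ∧ (∃ μ4 : ℝ, R e4 = μ4 • e4) ∧
      (∃ μ5 : ℝ, R e5 = μ5 • e5) ∧
      eta e1 e2 = 0 ∧ eta e1 e3 = 0 ∧ eta e1 e4 = 0 ∧ eta e1 e5 = 0 ∧
      eta e2 e3 = 0 ∧ eta e2 e4 = 0 ∧ eta e2 e5 = 0 ∧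
      eta e3 e4 = 0 ∧ eta e3 e5 = 0 ∧ eta e4 e5 = 0 ∧
      eta e1 e1 = -1 ∧ eta e2 e2 = 1 ∧ eta e3 e3 = 1 ∧
      eta e4 e4 = 1 ∧ eta e5 e5 = 1 := by
  classical
  have hWmem : ∀ x : Wt t, eta t x.val = 0 := fun x => x.2
  have hRW : ∀ x ∈ LinearMap.ker (etaL t), R x ∈ LinearMap.ker (etaL t) := by
    intro x hx
    have hx' : eta t x = 0 := hx
    show eta t (R x) = 0
    calc eta t (R x) = eta (R t) x := (hR t x).symm
    _ = μ * eta t x := by rw [hμ, eta_smul_left]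
    _ = 0 := by rw [hx', mul_zero]
  have hpos : ∀ x : Wt t, x.val ≠ 0 → 0 < eta x.val x.val := fun x hx =>
    eta_pos_of_orth ht (hWmem x) hx
  letI C : InnerProductSpace.Core ℝ (Wt t) :=
    { inner := fun x y => eta x.val y.val
      conj_inner_symm := fun x y => by simpa using eta_comm y.val x.val
      re_inner_nonneg := fun x => by
        rcases eq_or_ne x.val 0 with h | h
        · simp only [RCLike.re_to_real]; rw [show x.val = 0 from h]
          simp [eta]
        · simpa using (hpos x h).le
      definite := fun x hx => by
        by_contra h
        have hx0 : x.val ≠ 0 := fun h0 => h (Subtype.ext h0)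
        exact (hpos x hx0).ne' hx
      add_left := fun x y z => eta_add_left x.val y.val z.val
      smul_left := fun x y r => by simp only [conj_trivial]; exact eta_smul_left r x.val y.val }
  letI : NormedAddCommGroup (Wt t) := @InnerProductSpace.Core.toNormedAddCommGroup ℝ (Wt t) _ _ _ C
  letI : InnerProductSpace ℝ (Wt t) := InnerProductSpace.ofCore C.toCore
  let S : Wt t →ₗ[ℝ] Wt t := R.restrict hRW
  have hScoe : ∀ x : Wt t, (S x).val = R x.val := fun x => rfl
  have hSsym : S.IsSymmetric := by
    intro x y
    show (inner ℝ (S x) y : ℝ) = inner ℝ x (S y)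
    change eta (S x).val y.val = eta x.val (S y).val
    rw [hScoe, hScoe]
    exact hR x.val y.val
  have hfin : Module.finrank ℝ (Wt t) = 4 := by
    have hsurj : Function.Surjective (etaL t) := by
      intro r
      refine ⟨(r / eta t t) • t, ?_⟩
      show eta t ((r / eta t t) • t) = r
      rw [eta_smul_right, div_mul_eq_mul_div, mul_div_assoc, div_self (ne_of_lt ht), mul_one]
    have h1 : Module.finrank ℝ (LinearMap.range (etaL t)) = 1 := by
      rw [LinearMap.range_eq_top.2 hsurj]
      simp
    have h2 := (etaL t).finrank_range_add_finrank_ker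
    rw [h1] at h2
    have h5 : Module.finrank ℝ (Fin 5 → ℝ) = 5 := by simp
    rw [h5] at h2
    have : Module.finrank ℝ (Wt t) = Module.finrank ℝ (LinearMap.ker (etaL t)) := rfl
    omega
  let b := hSsym.eigenvectorBasis hfin
  have heig : ∀ i, R (b i).val = (hSsym.eigenvalues hfin i) • (b i).val := by
    intro i
    have h := hSsym.apply_eigenvectorBasis hfin i
    calc R (b i).val = (S (b i)).val := (hScoe _).symm
    _ = ((hSsym.eigenvalues hfin i : ℝ) • b i).val := by rw [h]; rfl
    _ = (hSsym.eigenvalues hfin i) • (b i).val := rfl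
  have horth : ∀ i j, eta (b i).val (b j).val = if i = j then 1 else 0 := by
    intro i j
    have h := orthonormal_iff_ite.1 b.orthonormal i j
    exact h
  -- the normalized timelike vector
  have htne : eta t t ≠ 0 := ne_of_lt ht
  have hneg : (0:ℝ) < -eta t t := by linarith
  set nn : ℝ := Real.sqrt (-eta t t) with hnn
  have hnnpos : 0 < nn := Real.sqrt_pos.2 hneg
  have hnsq : nn * nn = -eta t t := Real.mul_self_sqrt hneg.le
  set e1 : Fin 5 → ℝ := nn⁻¹ • t with he1
  have h11 : eta e1 e1 = -1 := by
    rw [he1, eta_smul_left, eta_smul_right]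
    rw [show eta t t = -(nn * nn) by linarith]
    field_simp
  have h1v : ∀ x : Wt t, eta e1 x.val = 0 := by
    intro x
    rw [he1, eta_smul_left, hWmem x, mul_zero]
  have hRe1 : R e1 = μ • e1 := by
    rw [he1, map_smul, hμ, smul_comm]
  set v : Fin 4 → (Fin 5 → ℝ) := fun i => (b i).val with hv
  have hvv : ∀ i j, eta (v i) (v j) = if i = j then 1 else 0 := horth
  have hvij : ∀ i j, i ≠ j → eta (v i) (v j) = 0 := fun i j h => by rw [hvv, if_neg h]
  have hvii : ∀ i, eta (v i) (v i) = 1 := fun i => by rw [hvv, if_pos rfl]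
  have hv1 : ∀ i, eta (v i) e1 = 0 := fun i => by rw [eta_comm]; exact h1v (b i)
  have h1vi : ∀ i, eta e1 (v i) = 0 := fun i => h1v (b i)
  -- linear independence
  have hli : LinearIndependent ℝ ![e1, v 0, v 1, v 2, v 3] := by
    rw [Fintype.linearIndependent_iff]
    intro g hg
    rw [Fin.sum_univ_five] at hg
    simp only [Matrix.cons_val_zero, Matrix.cons_val_one, Matrix.head_cons,
      Matrix.cons_val_two, Matrix.tail_cons, Matrix.cons_val_three,
      Matrix.cons_val_four] at hg
    have key : ∀ u, g 0 * eta u e1 + g 1 * eta u (v 0) + g 2 * eta u (v 1)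
        + g 3 * eta u (v 2) + g 4 * eta u (v 3) = 0 := by
      intro u
      have h0 := congrArg (eta u) hg
      simpa only [eta_add_right, eta_smul_right, eta_zero_right] using h0
    have hg0 : g 0 = 0 := by
      have k := key e1
      rw [h11, h1vi 0, h1vi 1, h1vi 2, h1vi 3] at k
      linarith
    have hg1 : g 1 = 0 := by
      have k := key (v 0)
      rw [hv1 0, hvii 0, hvij 0 1 (by decide), hvij 0 2 (by decide),
        hvij 0 3 (by decide)] at k
      linarith
    have hg2 : g 2 = 0 := by
      have k := key (v 1)
      rw [hv1 1, hvii 1, hvij 1 0 (by decide), hvij 1 2 (by decide),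
        hvij 1 3 (by decide)] at k
      linarith
    have hg3 : g 3 = 0 := by
      have k := key (v 2)
      rw [hv1 2, hvii 2, hvij 2 0 (by decide), hvij 2 1 (by decide),
        hvij 2 3 (by decide)] at k
      linarith
    have hg4 : g 4 = 0 := by
      have k := key (v 3)
      rw [hv1 3, hvii 3, hvij 3 0 (by decide), hvij 3 1 (by decide),
        hvij 3 2 (by decide)] at k
      linarith
    intro i
    fin_cases i
    · exact hg0
    · exact hg1
    · exact hg2
    · exact hg3
    · exact hg4
  have hspan : Submodule.span ℝ {e1, v 0, v 1, v 2, v 3} = (⊤ : Submodule ℝ (Fin 5 → ℝ)) := by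
    have hr : ({e1, v 0, v 1, v 2, v 3} : Set (Fin 5 → ℝ))
        = Set.range ![e1, v 0, v 1, v 2, v 3] := by
      ext x
      simp only [Set.mem_insert_iff, Set.mem_singleton_iff, Matrix.range_cons,
        Matrix.range_empty, Set.union_empty, Set.mem_union, Set.mem_range,
        Set.mem_setOf_eq]
    rw [hr]
    apply Submodule.eq_top_of_finrank_eq
    rw [finrank_span_eq_card hli]
    simp
  exact ⟨e1, v 0, v 1, v 2, v 3, ⟨hli, hspan⟩, ⟨μ, hRe1⟩,
    ⟨_, heig 0⟩, ⟨_, heig 1⟩, ⟨_, heig 2⟩, ⟨_, heig 3⟩,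
    h1vi 0, h1vi 1, h1vi 2, h1vi 3,
    hvij 0 1 (by decide), hvij 0 2 (by decide), hvij 0 3 (by decide),
    hvij 1 2 (by decide), hvij 1 3 (by decide), hvij 2 3 (by decide),
    h11, hvii 0, hvii 1, hvii 2, hvii 3⟩
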